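/- A locally compact Hausdorff topological group G is approximable by finite semigroups if and only if it is approximable by finite groups. Here, for a class K of finite algebras, G is approximable by algebras of K if for every compact set C ⊆ G and every neighborhood U of the identity there exist H ∈ K and an injective map j : H → G such that C ⊆ j(H)U and for all x,y ∈ H with j(x), j(y), j(x)·j(y) ∈ C one has j(x⊙y) ∈ j(x)j(y)U, where ⊙ is the operation of H. -/

import Mathlib

open Pointwise

namespace Stmt3Aux

/-! ### Semigroup power gadgets -/

variable {S : Type} [Semigroup S]

/-- `pw x n = x^(n+1)` in a bare semigroup. -/
def pw (x : S) : ℕ → S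
  | 0 => x
  | n+1 => pw x n * x

lemma pw_succ (x : S) (n : ℕ) : pw x (n+1) = pw x n * x := rfl

lemma pw_comm (x : S) (n : ℕ) : pw x n * x = x * pw x n := by
  induction n with
  | zero => rfl
  | succ n ih =>
    show pw x n * x * x = x * (pw x n * x)
    rw [ih, mul_assoc, ih]

lemma pw_add (x : S) (m n : ℕ) : pw x m * pw x n = pw x (m + n + 1) := by
  induction n with
  | zero => rfl
  | succ n ih =>
    rw [pw_succ x n, ← mul_assoc, ih]
    rfl

private lemma exists_idem_pw_aux [Finite S] (z : S) {i j : ℕ} (hlt : i < j)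
    (hij : pw z i = pw z j) : ∃ m, pw z m * pw z m = pw z m := by
  obtain ⟨p, hp, hkey⟩ : ∃ p, 0 < p ∧ pw z (i + p) = pw z i :=
    ⟨j - i, by omega, by rw [show i + (j - i) = j by omega, hij]⟩
  have hstep : ∀ d, pw z (i + d + p) = pw z (i + d) := by
    intro d
    cases d with
    | zero => simpa using hkey
    | succ e =>
      have h1 : i + (e+1) + p = (i + p) + e + 1 := by omega
      have h2 : i + (e+1) = i + e + 1 := by omega
      rw [h1, ← pw_add, hkey, pw_add, h2]
  have hk : ∀ k d, pw z (i + d + k * p) = pw z (i + d) := by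
    intro k
    induction k with
    | zero => simp
    | succ k ih =>
      intro d
      have h3 : i + d + (k+1) * p = i + (d + k * p) + p := by ring
      rw [h3, hstep, show i + (d + k * p) = i + d + k * p by ring, ih]
  refine ⟨(i+1) * p - 1, ?_⟩
  have hge : (i+1) * p ≥ i + 1 := le_mul_of_one_le_right (by omega) hp
  have hm : (i+1) * p - 1 + ((i+1) * p - 1) + 1 = i + (((i+1)*p - 1) - i) + (i+1) * p := by
    omega
  rw [pw_add, hm, hk]
  congr 1
  omega

lemma exists_idem_pw [Finite S] (z : S) : ∃ m, pw z m * pw z m = pw z m := by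
  obtain ⟨i, j, hne, hij⟩ := Finite.exists_ne_map_eq_of_infinite (pw z)
  rcases lt_or_gt_of_ne hne with hlt | hlt
  · exact exists_idem_pw_aux z hlt hij
  · exact exists_idem_pw_aux z hlt hij.symm

/-- Green stability witnesses: from a "return" of `z*z` to `z` by right
multiplication, get both a right and a left division witness. -/
lemma green_witnesses [Finite S] (z : S)
    (hz : z = z * z ∨ ∃ w, z = z * z * w) :
    (∃ g, z * z * g = z) ∧ (∃ h, h * (z * z) = z) := by
  rcases hz with hz | ⟨w, hz⟩
  · refine ⟨⟨z, ?_⟩, ⟨z, ?_⟩⟩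
    · rw [← hz, ← hz]
    · rw [← hz, ← hz]
  · have iter : ∀ m, z = pw z m * z * pw w m := by
      intro m
      induction m with
      | zero => exact hz
      | succ m ih =>
        have step2 : z = pw z m * (z * z * w) * pw w m := by
          rw [← hz]; exact ih
        rw [pw_succ z m, pw_succ w m, pw_comm w m]
        simp only [mul_assoc] at step2 ⊢
        exact step2
    obtain ⟨m, hm⟩ := exists_idem_pw z
    have htz : pw z m * z = z := by
      have h2 : pw z m * (pw z m * z * pw w m) = pw z m * z * pw w m := by
        simp only [← mul_assoc]
        rw [hm]
      rw [← iter m] at h2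
      exact h2
    refine ⟨⟨w, hz.symm⟩, ?_⟩
    cases m with
    | zero =>
      refine ⟨z, ?_⟩
      have hzz : z * z = z := htz
      rw [show z * (z * z) = z * z * z from (mul_assoc _ _ _).symm, hzz, hzz]
    | succ k =>
      exact ⟨pw z k, by rw [← mul_assoc]; exact htz⟩

/-! ### Monoid core around an idempotent -/

@[reducible] def MonCore (e : S) : Type _ := {x : S // e * x = x ∧ x * e = x}

instance MonCore.finite {e : S} [Finite S] : Finite (MonCore e) := by
  unfold MonCore; exact Subtype.finite

def monCoreMonoid (e : S) (he : e * e = e) : Monoid (MonCore e) where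
  mul a b := ⟨a.1 * b.1, by rw [← mul_assoc, a.2.1], by rw [mul_assoc, b.2.2]⟩
  one := ⟨e, he, he⟩
  mul_assoc a b c := Subtype.ext (mul_assoc a.1 b.1 c.1)
  one_mul a := Subtype.ext a.2.1
  mul_one a := Subtype.ext a.2.2

lemma isUnit_of_right_inv {M : Type*} [Monoid M] [Finite M] (a b : M) (h : a * b = 1) :
    IsUnit a := by
  have hsurj : Function.Surjective (fun x => a * x) := by
    intro y
    refine ⟨b * y, ?_⟩
    show a * (b * y) = y
    rw [← mul_assoc, h, one_mul]
  have hinj : Function.Injective (fun x => a * x) :=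
    Finite.injective_iff_surjective.mpr hsurj
  have hba : b * a = 1 := by
    have : a * (b * a) = a * 1 := by rw [← mul_assoc, h, one_mul, mul_one]
    exact hinj this
  exact ⟨⟨a, b, h, hba⟩, rfl⟩

/-! ### Reachability machinery -/

lemma exists_terminal {H : Type} [Fintype H] (step : H → H → Prop) (u₀ : H) :
    ∃ z, Relation.ReflTransGen step u₀ z ∧
      ∀ y, Relation.ReflTransGen step z y → Relation.ReflTransGen step y z := by
  classical
  set R : H → Set H := fun x => {y | Relation.ReflTransGen step x y} with hR
  obtain ⟨z, hz, hmin⟩ := Finset.exists_min_image ((R u₀).toFinset)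
    (fun x => (R x).toFinset.card)
    ⟨u₀, by rw [Set.mem_toFinset]; exact Relation.ReflTransGen.refl⟩
  have hzmem : Relation.ReflTransGen step u₀ z := by
    rw [Set.mem_toFinset] at hz; exact hz
  refine ⟨z, hzmem, ?_⟩
  intro y hy
  have hyu : Relation.ReflTransGen step u₀ y := hzmem.trans hy
  have hsub : R y ⊆ R z := fun w hw => hy.trans hw
  have hcard : (R z).toFinset.card ≤ (R y).toFinset.card :=
    hmin y (by rw [Set.mem_toFinset]; exact hyu)
  have heq : (R y).toFinset = (R z).toFinset :=
    Finset.eq_of_subset_of_card_le (Set.toFinset_subset_toFinset.mpr hsub) hcard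
  have hfin : z ∈ (R y).toFinset := by
    rw [heq, Set.mem_toFinset]
    exact Relation.ReflTransGen.refl
  rw [Set.mem_toFinset] at hfin
  exact hfin

lemma reach_decomp {step : S → S → Prop}
    (hstep : ∀ a b, step a b → ∃ c, b = a * c) {x y : S}
    (h : Relation.ReflTransGen step x y) : y = x ∨ ∃ w, y = x * w := by
  induction h with
  | refl => exact Or.inl rfl
  | tail _ hs ih =>
    obtain ⟨c, rfl⟩ := hstep _ _ hs
    rcases ih with rfl | ⟨w, rfl⟩
    · exact Or.inr ⟨c, rfl⟩
    · exact Or.inr ⟨w * c, by rw [mul_assoc]⟩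

/-! ### Topology lemmas -/

variable {G : Type*} [Group G] [TopologicalSpace G] [IsTopologicalGroup G]

lemma exists_conj_nhds (K U₀ : Set G) (hK : IsCompact K) (hU : IsOpen U₀)
    (h1 : (1:G) ∈ U₀) :
    ∃ V : Set G, IsOpen V ∧ (1:G) ∈ V ∧ ∀ k ∈ K, ∀ v ∈ V, k * v * k⁻¹ ∈ U₀ := by
  classical
  have hf : Continuous (fun p : G × G => p.1 * p.2 * p.1⁻¹) := by continuity
  set Spre : Set (G × G) := (fun p : G × G => p.1 * p.2 * p.1⁻¹) ⁻¹' U₀ with hSpre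
  have hSopen : IsOpen Spre := hU.preimage hf
  have hmem : ∀ k : G, (k, (1:G)) ∈ Spre := by
    intro k; simp [hSpre, h1]
  have hnb : ∀ k : G, ∃ A B : Set G, IsOpen A ∧ k ∈ A ∧ IsOpen B ∧ (1:G) ∈ B ∧
      A ×ˢ B ⊆ Spre := by
    intro k
    have : Spre ∈ nhds (k, (1:G)) := hSopen.mem_nhds (hmem k)
    rw [mem_nhds_prod_iff'] at this
    obtain ⟨A, B, hA, hkA, hB, h1B, hAB⟩ := this
    exact ⟨A, B, hA, hkA, hB, h1B, hAB⟩
  choose A B hA hkA hB h1B hAB using hnb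
  obtain ⟨t, ht⟩ := hK.elim_finite_subcover A hA
    (fun k _ => Set.mem_iUnion.mpr ⟨k, hkA k⟩)
  refine ⟨⋂ k ∈ t, B k, isOpen_biInter_finset (fun k _ => hB k), ?_, ?_⟩
  · exact Set.mem_iInter₂.mpr fun k _ => h1B k
  · intro k hk v hv
    obtain ⟨i, hit, hki⟩ := Set.mem_iUnion₂.mp (ht hk)
    have hvBi : v ∈ B i := Set.mem_iInter₂.mp hv i hit
    have hpair : (k, v) ∈ A i ×ˢ B i := ⟨hki, hvBi⟩
    exact hAB i hpair

lemma exists_symm_split (U : Set G) (hU : U ∈ nhds (1:G)) :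
    ∃ V : Set G, IsOpen V ∧ (1:G) ∈ V ∧ (∀ x ∈ V, x⁻¹ ∈ V) ∧
      ∀ a ∈ V, ∀ b ∈ V, a * b ∈ U := by
  obtain ⟨W, hWo, h1W, hWW⟩ := exists_open_nhds_one_mul_subset hU
  refine ⟨W ∩ W⁻¹, hWo.inter hWo.inv, ⟨h1W, by simpa using h1W⟩, ?_, ?_⟩
  · rintro x ⟨hx1, hx2⟩
    exact ⟨by simpa using hx2, by simpa using hx1⟩
  · intro a ha b hb
    exact hWW (Set.mul_mem_mul ha.1 hb.1)

/-! ### Pointwise power membership helpers -/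

lemma isCompact_pow {Q : Set G} (hQ : IsCompact Q) : ∀ n, IsCompact (Q ^ (n+1))
  | 0 => by simpa using hQ
  | n+1 => by
    rw [pow_succ]
    exact (isCompact_pow hQ n).mul hQ

lemma one_mem_pow {Q : Set G} (h1 : (1:G) ∈ Q) : ∀ n, (1:G) ∈ Q ^ n
  | 0 => by simp
  | n+1 => by
    rw [pow_succ]
    simpa using Set.mul_mem_mul (one_mem_pow h1 n) h1

lemma mul_mem_pow {Q : Set G} {x y : G} {m n : ℕ} (hx : x ∈ Q ^ m) (hy : y ∈ Q ^ n) :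
    x * y ∈ Q ^ (m + n) := by
  rw [pow_add]
  exact Set.mul_mem_mul hx hy

lemma mem_pow_mono {Q : Set G} (h1 : (1:G) ∈ Q) {x : G} {m n : ℕ} (hmn : m ≤ n)
    (hx : x ∈ Q ^ m) : x ∈ Q ^ n := by
  have h := mul_mem_pow hx (one_mem_pow h1 (n - m))
  rw [mul_one] at h
  rwa [show m + (n - m) = n by omega] at h

lemma mem_pow_single {Q : Set G} {x : G} (hx : x ∈ Q) : x ∈ Q ^ 1 := by
  simpa using hx

lemma inv_mem_pow {Q : Set G} (hsym : ∀ y ∈ Q, y⁻¹ ∈ Q) {x : G} :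
    ∀ {n : ℕ}, x ∈ Q ^ n → x⁻¹ ∈ Q ^ n := by
  intro n
  induction n generalizing x with
  | zero => simp
  | succ n ih =>
    intro hx
    rw [pow_succ] at hx
    obtain ⟨a, ha, b, hb, rfl⟩ := Set.mem_mul.mp hx
    rw [mul_inv_rev, pow_succ']
    exact Set.mul_mem_mul (hsym b hb) (ih ha)

end Stmt3Aux

open Stmt3Aux

/-- A locally compact group is approximable by finite semigroups iff it is
approximable by finite groups. -/
theorem stmt_3 {G : Type*} [Group G] [TopologicalSpace G] [IsTopologicalGroup G]
    [LocallyCompactSpace G] [T2Space G] :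
    (∀ (C : Set G), IsCompact C → ∀ U ∈ nhds (1 : G),
      ∃ (H : Type) (_ : Fintype H) (hop : H → H → H) (j : H → G),
        (∀ x y z : H, hop (hop x y) z = hop x (hop y z)) ∧
        Function.Injective j ∧
        C ⊆ Set.range j * U ∧
        ∀ x y : H, j x ∈ C → j y ∈ C → j x * j y ∈ C →
          j (hop x y) ∈ (j x * j y) • U)
    ↔
    (∀ (C : Set G), IsCompact C → ∀ U ∈ nhds (1 : G),
      ∃ (H : Type) (_ : Fintype H) (_ : Group H) (j : H → G),
        Function.Injective j ∧
        C ⊆ Set.range j * U ∧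
        ∀ x y : H, j x ∈ C → j y ∈ C → j x * j y ∈ C →
          j (x * y) ∈ (j x * j y) • U) := by
  constructor
  · -- hard direction: semigroups → groups
    intro hsg C hC U hU
    classical
    -- compact symmetric neighborhood N of 1
    obtain ⟨K₁, hK₁c, hK₁n⟩ := exists_compact_mem_nhds (1:G)
    have h1K₁ : (1:G) ∈ interior K₁ := mem_interior_iff_mem_nhds.mpr hK₁n
    have hNc : IsCompact (K₁ ∪ K₁⁻¹) := hK₁c.union hK₁c.inv
    -- U₁ inside U and inside K₁
    have hU₁ : U ∩ interior K₁ ∈ nhds (1:G) :=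
      Filter.inter_mem hU (isOpen_interior.mem_nhds h1K₁)
    -- nested symmetric splittings
    obtain ⟨B₁, hB₁o, h1B₁, hB₁s, hB₁m⟩ := exists_symm_split _ hU₁
    obtain ⟨B₂, hB₂o, h1B₂, hB₂s, hB₂m⟩ := exists_symm_split B₁ (hB₁o.mem_nhds h1B₁)
    obtain ⟨B₃, hB₃o, h1B₃, hB₃s, hB₃m⟩ := exists_symm_split B₂ (hB₂o.mem_nhds h1B₂)
    have hB₁U₁ : B₁ ⊆ U ∩ interior K₁ := fun b hb => by
      simpa using hB₁m b hb 1 h1B₁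
    have hB₂B₁ : B₂ ⊆ B₁ := fun b hb => by
      simpa using hB₂m b hb 1 h1B₂
    have hB₃B₂ : B₃ ⊆ B₂ := fun b hb => by
      simpa using hB₃m b hb 1 h1B₃
    have hB₃U : B₃ ⊆ U := fun b hb => (hB₁U₁ (hB₂B₁ (hB₃B₂ hb))).1
    have hB₃N : B₃ ⊆ K₁ ∪ K₁⁻¹ := fun b hb =>
      Or.inl (interior_subset (hB₁U₁ (hB₂B₁ (hB₃B₂ hb))).2)
    -- product of three B₃ elements lies in U
    have hthree : ∀ a ∈ B₃, ∀ b ∈ B₃, ∀ c ∈ B₃, a * b * c ∈ U := by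
      intro a ha b hb c hc
      exact (hB₁U₁ (hB₂m _ (hB₃m a ha b hb) _ (hB₃B₂ hc))).1
    -- the compact generating set Q
    set Q : Set G := (C ∪ C⁻¹ ∪ {1}) ∪ (K₁ ∪ K₁⁻¹) with hQdef
    have hQc : IsCompact Q := (((hC.union hC.inv).union isCompact_singleton).union hNc)
    have h1Q : (1:G) ∈ Q := Or.inl (Or.inr rfl)
    have hQs : ∀ x ∈ Q, x⁻¹ ∈ Q := by
      rintro x (((h | h) | h) | (h | h))
      · exact Or.inl (Or.inl (Or.inr (by simpa using h)))
      · exact Or.inl (Or.inl (Or.inl (by simpa using h)))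
      · exact Or.inl (Or.inr (by simp_all))
      · exact Or.inr (Or.inr (by simpa using h))
      · exact Or.inr (Or.inl (by simpa using h))
    have hCQ : C ⊆ Q := fun c hc => Or.inl (Or.inl (Or.inl hc))
    have hB₃Q : B₃ ⊆ Q := fun b hb => Or.inr (hB₃N hb)
    -- conjugation-robust small V
    obtain ⟨V', hV'o, h1V', hV'conj⟩ := exists_conj_nhds (Q^4) B₃
      (isCompact_pow hQc 3) hB₃o h1B₃
    have hVo : IsOpen (V' ∩ V'⁻¹ ∩ B₃) := (hV'o.inter hV'o.inv).inter hB₃o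
    have h1V : (1:G) ∈ V' ∩ V'⁻¹ ∩ B₃ := ⟨⟨h1V', by simpa using h1V'⟩, h1B₃⟩
    set V : Set G := V' ∩ V'⁻¹ ∩ B₃ with hVdef
    have hVs : ∀ v ∈ V, v⁻¹ ∈ V := by
      rintro v ⟨⟨h1, h2⟩, h3⟩
      exact ⟨⟨by simpa using h2, by simpa using h1⟩, hB₃s v h3⟩
    have hVB₃ : V ⊆ B₃ := fun v hv => hv.2
    have hVQ : V ⊆ Q := fun v hv => hB₃Q hv.2
    have hVU : V ⊆ U := fun v hv => hB₃U hv.2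
    have hVconj : ∀ k ∈ Q^4, ∀ v ∈ V, k * v * k⁻¹ ∈ B₃ := by
      intro k hk v hv
      exact hV'conj k hk v hv.1.1
    have hVnhds : V ∈ nhds (1:G) := hVo.mem_nhds h1V
    -- apply the semigroup approximation hypothesis to (Q^64, V)
    obtain ⟨H, hFin, hop, j, hassoc, hinj, hcov, happ⟩ :=
      hsg (Q^64) (isCompact_pow hQc 63) V hVnhds
    haveI := hFin
    letI : Semigroup H := { mul := hop, mul_assoc := hassoc }
    -- approximate multiplicativity, convenient form
    have hmulE : ∀ x c : H, j x ∈ Q^48 → j c ∈ Q^48 → j x * j c ∈ Q^48 →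
        ∃ v ∈ V, j (x * c) = j x * j c * v := by
      intro x c hx hc hxc
      have h := happ x c (mem_pow_mono h1Q (by norm_num) hx)
        (mem_pow_mono h1Q (by norm_num) hc) (mem_pow_mono h1Q (by norm_num) hxc)
      rw [Set.mem_smul_set] at h
      obtain ⟨v, hv, hveq⟩ := h
      rw [smul_eq_mul] at hveq
      exact ⟨v, hv, hveq.symm⟩
    -- covering, convenient form
    have hcov' : ∀ τ : G, τ ∈ Q^64 → ∃ (c : H) (v : G), v ∈ V ∧ j c = τ * v := by
      intro τ hτ
      obtain ⟨a, ⟨c, rfl⟩, b, hb, hab⟩ := Set.mem_mul.mp (hcov hτ)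
      exact ⟨c, b⁻¹, hVs b hb, by rw [← hab]; group⟩
    -- the step relation
    set step : H → H → Prop := fun x y =>
      j x ∈ Q^8 ∧ j y ∈ Q^8 ∧ ∃ c, y = x * c ∧ j c ∈ Q^48 ∧ j x * j c ∈ Q^48
      with hstepdef
    have hstep_decomp : ∀ a b : H, step a b → ∃ c, b = a * c :=
      fun a b hs => ⟨hs.2.2.choose, hs.2.2.choose_spec.1⟩
    -- u₀ approximating 1
    obtain ⟨u₀, v₀, hv₀, hju₀⟩ := hcov' 1 (one_mem_pow h1Q 64)
    have hju₀V : j u₀ ∈ V := by rw [hju₀, one_mul]; exact hv₀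
    -- terminal z₀
    obtain ⟨z₀, hz₀r, hz₀t⟩ := exists_terminal step u₀
    have hreach_good : ∀ y, Relation.ReflTransGen step u₀ y → j y ∈ Q^8 := by
      intro y hy
      induction hy with
      | refl => exact mem_pow_mono h1Q (by norm_num) (mem_pow_single (hVQ hju₀V))
      | tail _ hs _ => exact hs.2.1
    have hz₀good : j z₀ ∈ Q^8 := hreach_good z₀ hz₀r
    -- steer z₀ to z with value in V·V
    have hz₀inv : (j z₀)⁻¹ ∈ Q^8 := inv_mem_pow hQs hz₀good
    obtain ⟨q, vq, hvq, hjq⟩ := hcov' (j z₀)⁻¹ (mem_pow_mono h1Q (by norm_num) hz₀inv)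
    have hjzq : j z₀ * j q = vq := by rw [hjq]; group
    have hjqm : j q ∈ Q^9 := by
      rw [hjq]; exact mul_mem_pow hz₀inv (mem_pow_single (hVQ hvq))
    obtain ⟨vz, hvz, hjz⟩ := hmulE z₀ q (mem_pow_mono h1Q (by norm_num) hz₀good)
      (mem_pow_mono h1Q (by norm_num) hjqm)
      (by rw [hjzq]; exact mem_pow_mono h1Q (by norm_num) (mem_pow_single (hVQ hvq)))
    set z : H := z₀ * q with hzdef
    have hjz' : j z = vq * vz := by rw [hjz, hjzq]
    have hjz2 : j z ∈ Q^2 := by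
      rw [hjz']
      exact mul_mem_pow (mem_pow_single (hVQ hvq)) (mem_pow_single (hVQ hvz))
    have hjz8 : j z ∈ Q^8 := mem_pow_mono h1Q (by norm_num) hjz2
    have hstep₀ : step z₀ z := ⟨hz₀good, hjz8, q, rfl,
      mem_pow_mono h1Q (by norm_num) hjqm,
      by rw [hjzq]; exact mem_pow_mono h1Q (by norm_num) (mem_pow_single (hVQ hvq))⟩
    have hzterm : ∀ y, Relation.ReflTransGen step z y → Relation.ReflTransGen step y z := by
      intro y hy
      exact (hz₀t y ((Relation.ReflTransGen.single hstep₀).trans hy)).tail hstep₀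
    -- z*z and the Green witnesses
    have hjz48 : j z ∈ Q^48 := mem_pow_mono h1Q (by norm_num) hjz2
    have hjzz48 : j z * j z ∈ Q^48 := mem_pow_mono h1Q (by norm_num) (mul_mem_pow hjz2 hjz2)
    obtain ⟨v2, hv2, hjz2'⟩ := hmulE z z hjz48 hjz48 hjzz48
    have hjzzm : j (z * z) ∈ Q^8 := by
      rw [hjz2']
      exact mem_pow_mono h1Q (by norm_num)
        (mul_mem_pow (mul_mem_pow hjz2 hjz2) (mem_pow_single (hVQ hv2)))
    have hstep2 : step z (z * z) := ⟨hjz8, hjzzm, z, rfl, hjz48, hjzz48⟩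
    have hret2 := hzterm (z * z) (Relation.ReflTransGen.single hstep2)
    have hdec2 := reach_decomp hstep_decomp hret2
    obtain ⟨⟨g, hg⟩, ⟨hL, hh⟩⟩ := green_witnesses z hdec2
    -- the idempotent e
    set e : H := z * g with hedef
    have hze : z * e = z := by
      rw [hedef, ← mul_assoc]; exact hg
    have heh : e = hL * z := by
      calc e = z * g := rfl
      _ = (hL * (z * z)) * g := by rw [hh]
      _ = hL * z := by rw [mul_assoc, hg]
    have hez : e * z = z := by
      calc e * z = (hL * z) * z := by rw [heh]
      _ = hL * (z * z) := by rw [mul_assoc]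
      _ = z := hh
    have hee : e * e = e := by
      nth_rewrite 2 [hedef]
      nth_rewrite 1 [heh]
      calc hL * z * (z * g) = hL * ((z * z) * g) := by simp only [mul_assoc]
      _ = hL * z := by rw [hg]
      _ = e := heh.symm
    -- the finite monoid and its unit group
    letI : Monoid (MonCore e) := monCoreMonoid e hee
    haveI : Finite (MonCore e) := MonCore.finite
    haveI : Finite (MonCore e)ˣ := Finite.of_injective Units.val (fun _ _ h => Units.ext h)
    refine ⟨(MonCore e)ˣ, Fintype.ofFinite _, inferInstance,
      fun γ => j γ.val.val, ?_, ?_, ?_⟩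
    · -- injectivity
      intro γ δ hγδ
      exact Units.ext (Subtype.ext (hinj hγδ))
    · -- covering
      intro c₀ hc₀
      have hc₀Q : c₀ ∈ Q := hCQ hc₀
      have hjzi : (j z)⁻¹ ∈ Q^2 := inv_mem_pow hQs hjz2
      have hτ₁ : (j z)⁻¹ * c₀ * (j z)⁻¹ ∈ Q^5 :=
        mul_mem_pow (mul_mem_pow hjzi (mem_pow_single hc₀Q)) hjzi
      obtain ⟨s₁, va, hva, hjs₁⟩ := hcov' ((j z)⁻¹ * c₀ * (j z)⁻¹)
        (mem_pow_mono h1Q (by norm_num) hτ₁)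
      have hjs₁m : j s₁ ∈ Q^6 := by
        rw [hjs₁]; exact mul_mem_pow hτ₁ (mem_pow_single (hVQ hva))
      have hjzs : j z * j s₁ = c₀ * (j z)⁻¹ * va := by rw [hjs₁]; group
      have hjzsm : j z * j s₁ ∈ Q^4 := by
        rw [hjzs]
        exact mul_mem_pow (mul_mem_pow (mem_pow_single hc₀Q) hjzi) (mem_pow_single (hVQ hva))
      obtain ⟨vb, hvb, hjy₁⟩ := hmulE z s₁ hjz48
        (mem_pow_mono h1Q (by norm_num) hjs₁m) (mem_pow_mono h1Q (by norm_num) hjzsm)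
      have hjy₁' : j (z * s₁) = c₀ * (j z)⁻¹ * va * vb := by rw [hjy₁, hjzs]
      have hjy₁m : j (z * s₁) ∈ Q^5 := by
        rw [hjy₁']
        exact mul_mem_pow (mul_mem_pow (mul_mem_pow (mem_pow_single hc₀Q) hjzi)
          (mem_pow_single (hVQ hva))) (mem_pow_single (hVQ hvb))
      have hstepy : step z (z * s₁) := ⟨hjz8, mem_pow_mono h1Q (by norm_num) hjy₁m,
        s₁, rfl, mem_pow_mono h1Q (by norm_num) hjs₁m,
        mem_pow_mono h1Q (by norm_num) hjzsm⟩
      -- conjugated error terms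
      have hkQ4 : (j z)⁻¹ ∈ Q^4 := mem_pow_mono h1Q (by norm_num) hjzi
      have ha' : (j z)⁻¹ * va * ((j z)⁻¹)⁻¹ ∈ B₃ := hVconj _ hkQ4 va hva
      have hb' : (j z)⁻¹ * vb * ((j z)⁻¹)⁻¹ ∈ B₃ := hVconj _ hkQ4 vb hvb
      have hjy₁z : j (z * s₁) * j z =
          c₀ * ((j z)⁻¹ * va * ((j z)⁻¹)⁻¹) * ((j z)⁻¹ * vb * ((j z)⁻¹)⁻¹) := by
        rw [hjy₁']; group
      have hjy₁zm : j (z * s₁) * j z ∈ Q^3 := by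
        rw [hjy₁z]
        exact mul_mem_pow (mul_mem_pow (mem_pow_single hc₀Q) (mem_pow_single (hB₃Q ha')))
          (mem_pow_single (hB₃Q hb'))
      obtain ⟨vc, hvc, hjx⟩ := hmulE (z * s₁) z
        (mem_pow_mono h1Q (by norm_num) hjy₁m) hjz48
        (mem_pow_mono h1Q (by norm_num) hjy₁zm)
      have hjxc : j ((z * s₁) * z) =
          c₀ * ((j z)⁻¹ * va * ((j z)⁻¹)⁻¹) * ((j z)⁻¹ * vb * ((j z)⁻¹)⁻¹) * vc := by
        rw [hjx, hjy₁z]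
      have hjxcm : j ((z * s₁) * z) ∈ Q^4 := by
        rw [hjxc]
        exact mul_mem_pow (mul_mem_pow (mul_mem_pow (mem_pow_single hc₀Q)
          (mem_pow_single (hB₃Q ha'))) (mem_pow_single (hB₃Q hb')))
          (mem_pow_single (hVQ hvc))
      have hstepx : step (z * s₁) ((z * s₁) * z) :=
        ⟨mem_pow_mono h1Q (by norm_num) hjy₁m, mem_pow_mono h1Q (by norm_num) hjxcm,
          z, rfl, hjz48, mem_pow_mono h1Q (by norm_num) hjy₁zm⟩
      -- return to z
      have hreachx : Relation.ReflTransGen step z ((z * s₁) * z) :=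
        (Relation.ReflTransGen.single hstepy).tail hstepx
      have hdecx := reach_decomp hstep_decomp (hzterm _ hreachx)
      have hdx : ∃ d, (z * s₁) * z * d = z := by
        rcases hdecx with h | ⟨w, h⟩
        · exact ⟨e, by rw [← h]; exact hze⟩
        · exact ⟨w, h.symm⟩
      obtain ⟨d, hd⟩ := hdx
      -- (z*s₁)*z is a unit of the monoid
      have hxcg : ((z * s₁) * z) * (d * g) = e := by
        rw [← mul_assoc, hd]
      have hey₁ : e * (z * s₁) = z * s₁ := by rw [← mul_assoc, hez]
      have hexc : e * ((z * s₁) * z) = (z * s₁) * z := by rw [← mul_assoc, hey₁]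
      have hxce : ((z * s₁) * z) * e = (z * s₁) * z := by rw [mul_assoc, hze]
      have huu1 : e * (e * (d * g) * e) = e * (d * g) * e := by
        simp only [← mul_assoc]
        rw [hee]
      have huu2 : (e * (d * g) * e) * e = e * (d * g) * e := by
        rw [mul_assoc (e * (d * g)) e e, hee]
      have hxcu : ((z * s₁) * z) * (e * (d * g) * e) = e := by
        calc ((z * s₁) * z) * (e * (d * g) * e)
            = ((((z * s₁) * z) * e) * (d * g)) * e := by simp only [mul_assoc]
        _ = (((z * s₁) * z) * (d * g)) * e := by rw [hxce]
        _ = e * e := by rw [hxcg]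
        _ = e := hee
      have hXU : (⟨(z * s₁) * z, hexc, hxce⟩ : MonCore e) *
          (⟨e * (d * g) * e, huu1, huu2⟩ : MonCore e) = 1 := Subtype.ext hxcu
      obtain ⟨γ, hγ⟩ := isUnit_of_right_inv _ _ hXU
      refine Set.mem_mul.mpr ⟨j ((z * s₁) * z), ⟨γ, by exact congrArg (fun m => j m.1) hγ⟩,
        (j ((z * s₁) * z))⁻¹ * c₀, ?_, by group⟩
      have hform : (j ((z * s₁) * z))⁻¹ * c₀ =
          vc⁻¹ * ((j z)⁻¹ * vb * ((j z)⁻¹)⁻¹)⁻¹ * ((j z)⁻¹ * va * ((j z)⁻¹)⁻¹)⁻¹ := by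
        rw [hjxc]; group
      rw [hform]
      exact hthree _ (hB₃s _ (hVB₃ hvc)) _ (hB₃s _ hb') _ (hB₃s _ ha')
    · -- approximate multiplicativity
      intro γ δ h1 h2 h3
      have hCE : ∀ {x : G}, x ∈ C → x ∈ Q^48 := fun hx =>
        mem_pow_mono h1Q (by norm_num) (mem_pow_single (hCQ hx))
      obtain ⟨v, hv, heq⟩ := hmulE γ.val.val δ.val.val (hCE h1) (hCE h2) (hCE h3)
      refine Set.mem_smul_set.mpr ⟨v, hVU hv, ?_⟩
      rw [smul_eq_mul]
      exact heq.symm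
  · -- easy direction: groups → semigroups
    intro hgp C hC U hU
    obtain ⟨H, hF, hG, j, hinj, hcov, hmul⟩ := hgp C hC U hU
    letI := hF; letI := hG
    exact ⟨H, hF, fun a b => a * b, j, fun x y z => mul_assoc x y z, hinj, hcov,
      fun x y hx hy hxy => by simpa using hmul x y hx hy hxy⟩
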